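/- If x* is a local minimum of (SPO), i.e. x* ∈ X and there is ε > 0 such that f(x*) + ρ‖x*‖₀ ≤ f(x) + ρ‖x‖₀ for all x ∈ X with ‖x − x*‖ < ε, then x* is an AS-stationary point of (SPO). -/

import Mathlib

open Filter Topology

noncomputable section

/-- Euclidean n-space. -/
abbrev E (n : ℕ) : Type := EuclideanSpace ℝ (Fin n)

/-- The "ℓ₀-norm": number of nonzero components. -/
def norm0 {n : ℕ} (x : E n) : ℕ := Set.ncard {i | x i ≠ 0}

/-- The SP-Lagrangian L(x, λ, μ) = f(x) + λᵀg(x) + μᵀh(x). -/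
def LSP {n m q : ℕ} (f : E n → ℝ) (g : Fin m → E n → ℝ) (h : Fin q → E n → ℝ)
    (lam : Fin m → ℝ) (mu : Fin q → ℝ) (x : E n) : ℝ :=
  f x + (∑ i, lam i * g i x) + (∑ j, mu j * h j x)

/-- AS-stationarity (approximate S-stationarity) of x* for (SPO). -/
def ASStat {n m q : ℕ} (f : E n → ℝ) (g : Fin m → E n → ℝ) (h : Fin q → E n → ℝ)
    (xstar : E n) : Prop :=
  ∃ (xk : ℕ → E n) (lamk : ℕ → Fin m → ℝ) (muk : ℕ → Fin q → ℝ),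
    Tendsto xk atTop (𝓝 xstar) ∧
    (∀ k i, 0 ≤ lamk k i) ∧
    (∀ i, xstar i ≠ 0 →
      Tendsto (fun k => gradient (LSP f g h (lamk k) (muk k)) (xk k) i) atTop (𝓝 0)) ∧
    (∀ i, Tendsto (fun k => min (-(g i (xk k))) (lamk k i)) atTop (𝓝 0))

lemma hasDerivAt_maxsq (t : ℝ) : HasDerivAt (fun s : ℝ => max s 0 ^ 2) (2 * max t 0) t := by
  rcases lt_trichotomy t 0 with ht | ht | ht
  · have hev : (fun s : ℝ => max s 0 ^ 2) =ᶠ[𝓝 t] fun _ => (0:ℝ) := by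
      filter_upwards [Iio_mem_nhds ht] with s hs
      simp [max_eq_right (le_of_lt (Set.mem_Iio.mp hs))]
    have : HasDerivAt (fun _ : ℝ => (0:ℝ)) 0 t := hasDerivAt_const t 0
    simpa [max_eq_right ht.le] using this.congr_of_eventuallyEq hev
  · subst ht
    have : (fun s : ℝ => max s 0 ^ 2 - max (0:ℝ) 0 ^ 2 - (s - 0) * 0) =o[𝓝 (0:ℝ)] fun s => s - 0 := by
      rw [Asymptotics.isLittleO_iff]
      intro c hc
      filter_upwards [eventually_abs_sub_lt (0:ℝ) hc] with s hs
      simp only [sub_zero, mul_zero, max_self, ne_eq]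
      have h1 : |max s 0| ≤ |s| := by
        rcases le_total s 0 with h | h
        · simp [max_eq_right h]
        · simp [max_eq_left h, abs_of_nonneg h]
      have : ‖max s 0 ^ 2‖ ≤ |s| * |s| := by
        rw [Real.norm_eq_abs, abs_pow, sq]
        exact mul_le_mul h1 h1 (abs_nonneg _) (abs_nonneg _)
      calc ‖max s 0 ^ 2 - 0 ^ 2‖ = ‖max s 0 ^ 2‖ := by norm_num
        _ ≤ |s| * |s| := this
        _ ≤ c * ‖s‖ := by
            rw [Real.norm_eq_abs]
            exact mul_le_mul_of_nonneg_right (le_of_lt (by simpa using hs)) (abs_nonneg _)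
    have := (hasDerivAt_iff_isLittleO (f := fun s : ℝ => max s 0 ^ 2) (f' := (0:ℝ)) (x := 0)).2
      (by simpa [smul_eq_mul, mul_comm] using this)
    simpa using this
  · have hev : (fun s : ℝ => max s 0 ^ 2) =ᶠ[𝓝 t] fun s => s ^ 2 := by
      filter_upwards [Ioi_mem_nhds ht] with s hs
      simp [max_eq_left (le_of_lt (Set.mem_Ioi.mp hs))]
    have : HasDerivAt (fun s : ℝ => s ^ 2) (2 * t) t := by simpa using hasDerivAt_pow 2 t
    simpa [max_eq_left ht.le] using this.congr_of_eventuallyEq hev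

lemma gradient_coord {n : ℕ} {F : E n → ℝ} {x : E n}
    {L : E n →L[ℝ] ℝ} (hF : HasFDerivAt F L x) (i : Fin n) :
    gradient F x i = L (EuclideanSpace.single i 1) := by
  have h1 : gradient F x = (InnerProductSpace.toDual ℝ (E n)).symm L := by
    rw [gradient, hF.fderiv]
  have h2 : (inner ℝ (gradient F x) (EuclideanSpace.single i (1:ℝ)) : ℝ)
      = L (EuclideanSpace.single i 1) := by
    rw [h1]; exact InnerProductSpace.toDual_symm_apply
  rw [EuclideanSpace.inner_single_right] at h2
  simpa using h2

/-- every local minimum of (SPO) is an AS-stationary point. -/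
theorem stmt_9 {n m q : ℕ} (hn : 1 ≤ n) {ρ : ℝ} (hρ : 0 < ρ)
    (f : E n → ℝ) (g : Fin m → E n → ℝ) (h : Fin q → E n → ℝ)
    (hf : ContDiff ℝ 1 f) (hg : ∀ i, ContDiff ℝ 1 (g i)) (hh : ∀ j, ContDiff ℝ 1 (h j))
    (xstar : E n)
    -- x* ∈ X :
    (hgx : ∀ i, g i xstar ≤ 0) (hhx : ∀ j, h j xstar = 0) (hxnn : ∀ i, 0 ≤ xstar i)
    -- x* is a local minimum of (SPO):
    (hlocmin : ∃ ε > (0 : ℝ), ∀ x : E n,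
      (∀ i, g i x ≤ 0) → (∀ j, h j x = 0) → (∀ i, 0 ≤ x i) →
      ‖x - xstar‖ < ε →
      f xstar + ρ * (norm0 xstar : ℝ) ≤ f x + ρ * (norm0 x : ℝ)) :
    ASStat f g h xstar := by
  classical
  obtain ⟨ε, hε, hmin⟩ := hlocmin
  set C : Set (E n) :=
    {x | (∀ j, 0 ≤ x j) ∧ (∀ j, xstar j = 0 → x j = 0) ∧ ‖x - xstar‖ ≤ ε / 2} with hC_def
  have hxC : xstar ∈ C := ⟨hxnn, fun j hj => hj, by simp; positivity⟩
  have hC_closed : IsClosed C := by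
    have h1 : IsClosed {x : E n | ∀ j, 0 ≤ x j} := by
      have he : {x : E n | ∀ j, 0 ≤ x j} = ⋂ j, {x : E n | 0 ≤ x j} := by
        ext x; simp [Set.mem_iInter]
      rw [he]
      exact isClosed_iInter fun j =>
        isClosed_le continuous_const (EuclideanSpace.proj j).continuous
    have h2 : IsClosed {x : E n | ∀ j, xstar j = 0 → x j = 0} := by
      have he : {x : E n | ∀ j, xstar j = 0 → x j = 0}
          = ⋂ j, {x : E n | xstar j = 0 → x j = 0} := by
        ext x; simp [Set.mem_iInter]
      rw [he]
      refine isClosed_iInter fun j => ?_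
      by_cases hj : xstar j = 0
      · simpa [hj] using isClosed_eq (EuclideanSpace.proj j).continuous
          (continuous_const : Continuous fun _ : E n => (0:ℝ))
      · simp [hj]
    have h3 : IsClosed {x : E n | ‖x - xstar‖ ≤ ε / 2} :=
      isClosed_le (continuous_id.sub continuous_const).norm continuous_const
    exact h1.inter (h2.inter h3)
  have hC_compact : IsCompact C := by
    refine (isCompact_closedBall xstar (ε/2)).of_isClosed_subset hC_closed ?_
    intro x hx
    simpa [Metric.mem_closedBall, dist_eq_norm] using hx.2.2
  set P : E n → ℝ := fun x => (∑ j, max (g j x) 0 ^ 2) + ∑ j, (h j x) ^ 2 with hP_def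
  set Q : E n → ℝ := fun x => ‖x - xstar‖ ^ 2 with hQ_def
  set Φ : ℕ → E n → ℝ := fun k x => f x + (k : ℝ) * P x + Q x with hΦ_def
  have hPnonneg : ∀ x, 0 ≤ P x := fun x =>
    add_nonneg (Finset.sum_nonneg fun j _ => by positivity)
      (Finset.sum_nonneg fun j _ => by positivity)
  have hQnonneg : ∀ x, 0 ≤ Q x := fun x => by simp only [hQ_def]; positivity
  have hQcont : Continuous Q := ((continuous_id.sub continuous_const).norm).pow 2
  have hPcont : Continuous P := by
    apply Continuous.add
    · exact continuous_finset_sum _ fun j _ => (((hg j).continuous.max continuous_const).pow 2)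
    · exact continuous_finset_sum _ fun j _ => ((hh j).continuous).pow 2
  have hΦcont : ∀ k, Continuous (Φ k) := fun k =>
    (hf.continuous.add (continuous_const.mul hPcont)).add hQcont
  have hne : C.Nonempty := ⟨xstar, hxC⟩
  choose xk hxkC hxkmin using fun k : ℕ =>
    hC_compact.exists_isMinOn hne (hΦcont k).continuousOn
  obtain ⟨z, hzC, hzmin⟩ := hC_compact.exists_isMinOn hne hf.continuous.continuousOn
  have hPstar : P xstar = 0 := by
    have h1 : ∀ j, max (g j xstar) 0 = 0 := fun j => max_eq_right (hgx j)
    simp [hP_def, h1, hhx]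
  have hΦle : ∀ k, Φ k (xk k) ≤ f xstar := fun k => by
    have h1 := isMinOn_iff.mp (hxkmin k) xstar hxC
    have h2 : Φ k xstar = f xstar := by simp [hΦ_def, hPstar, hQ_def]
    linarith
  have hfeas : ∀ x ∈ C, P x = 0 → f xstar ≤ f x := by
    rintro x ⟨hx1, hx2, hx3⟩ hPx
    have hA : 0 ≤ ∑ j, max (g j x) 0 ^ 2 := Finset.sum_nonneg fun j _ => by positivity
    have hB : 0 ≤ ∑ j, (h j x) ^ 2 := Finset.sum_nonneg fun j _ => by positivity
    have hPx' : (∑ j, max (g j x) 0 ^ 2) + ∑ j, (h j x) ^ 2 = 0 := hPx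
    have hA0 : (∑ j, max (g j x) 0 ^ 2) = 0 := by linarith
    have hB0 : (∑ j, (h j x) ^ 2) = 0 := by linarith
    have hgle : ∀ j, g j x ≤ 0 := by
      intro j
      have h1 := (Finset.sum_eq_zero_iff_of_nonneg
        (fun j _ => by positivity)).mp hA0 j (Finset.mem_univ j)
      have h2 : max (g j x) 0 = 0 :=
        (pow_eq_zero_iff (by norm_num : (2:ℕ) ≠ 0)).mp h1
      calc g j x ≤ max (g j x) 0 := le_max_left _ _
        _ = 0 := h2
    have hhe : ∀ j, h j x = 0 := by
      intro j
      have h1 := (Finset.sum_eq_zero_iff_of_nonneg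
        (fun j _ => by positivity)).mp hB0 j (Finset.mem_univ j)
      exact (pow_eq_zero_iff (by norm_num : (2:ℕ) ≠ 0)).mp h1
    have hsub : {i | x i ≠ 0} ⊆ {i | xstar i ≠ 0} := fun i hi hzz => hi (hx2 i hzz)
    have hcard : (norm0 x : ℝ) ≤ (norm0 xstar : ℝ) := by
      exact Nat.cast_le.mpr (Set.ncard_le_ncard hsub (Set.toFinite _))
    have hm := hmin x hgle hhe hx1 (lt_of_le_of_lt hx3 (by linarith))
    nlinarith [mul_le_mul_of_nonneg_left hcard hρ.le]
  have hfzle : f z ≤ f xstar := isMinOn_iff.mp hzmin xstar hxC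
  have hconv : Tendsto xk atTop (𝓝 xstar) := by
    rw [Metric.tendsto_atTop]
    intro δ hδ
    obtain ⟨p₀, hp₀pos, hp₀⟩ :
        ∃ p₀ > (0:ℝ), ∀ x ∈ C, δ ≤ ‖x - xstar‖ → f x + Q x ≤ f xstar → p₀ ≤ P x := by
      set S : Set (E n) := {x ∈ C | δ ≤ ‖x - xstar‖ ∧ f x + Q x ≤ f xstar} with hS_def
      rcases S.eq_empty_or_nonempty with hS | hS
      · exact ⟨1, one_pos, fun x hx h1 h2 =>
          absurd (show x ∈ S from ⟨hx, h1, h2⟩) (by simp [hS])⟩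
      · have hSclosed : IsClosed S := by
          refine hC_closed.inter (IsClosed.inter ?_ ?_)
          · exact isClosed_le continuous_const (continuous_id.sub continuous_const).norm
          · exact isClosed_le (hf.continuous.add hQcont) continuous_const
        have hScompact : IsCompact S :=
          hC_compact.of_isClosed_subset hSclosed fun x hx => hx.1
        obtain ⟨x₀, hx₀, hminP⟩ := hScompact.exists_isMinOn hS hPcont.continuousOn
        refine ⟨P x₀, ?_, fun x hx h1 h2 => isMinOn_iff.mp hminP x ⟨hx, h1, h2⟩⟩
        rcases (hPnonneg x₀).lt_or_eq with hlt | heq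
        · exact hlt
        · exfalso
          have hfx := hfeas x₀ hx₀.1 heq.symm
          have hQx : δ ^ 2 ≤ Q x₀ := by
            have := hx₀.2.1
            calc δ ^ 2 ≤ ‖x₀ - xstar‖ ^ 2 := pow_le_pow_left₀ hδ.le this 2
              _ = Q x₀ := by simp [hQ_def]
          have h22 := hx₀.2.2
          nlinarith
    obtain ⟨N, hN⟩ := exists_nat_gt ((f xstar - f z) / p₀)
    refine ⟨N, fun k hk => ?_⟩
    by_contra hcon
    push_neg at hcon
    have hd : δ ≤ ‖xk k - xstar‖ := by rwa [dist_eq_norm] at hcon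
    have h1 := hΦle k
    simp only [hΦ_def] at h1
    have hkP : 0 ≤ (k:ℝ) * P (xk k) := mul_nonneg (Nat.cast_nonneg k) (hPnonneg _)
    have h2 : f (xk k) + Q (xk k) ≤ f xstar := by linarith
    have h3 : p₀ ≤ P (xk k) := hp₀ _ (hxkC k) hd h2
    have h4 : (N : ℝ) ≤ (k : ℝ) := Nat.cast_le.mpr hk
    have h5 : f z ≤ f (xk k) := isMinOn_iff.mp hzmin _ (hxkC k)
    have h6 : f xstar - f z < N * p₀ := by
      rw [div_lt_iff₀ hp₀pos] at hN; linarith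
    have h7 : (N:ℝ) * p₀ ≤ (k:ℝ) * P (xk k) :=
      mul_le_mul h4 h3 hp₀pos.le (Nat.cast_nonneg k)
    have h8 : 0 ≤ Q (xk k) := hQnonneg _
    linarith
  set lamk : ℕ → Fin m → ℝ := fun k j => 2 * (k:ℝ) * max (g j (xk k)) 0 with hlamk_def
  set muk : ℕ → Fin q → ℝ := fun k j => 2 * (k:ℝ) * h j (xk k) with hmuk_def
  have hfd : Differentiable ℝ f := hf.differentiable one_ne_zero
  have hgd : ∀ j, Differentiable ℝ (g j) := fun j => (hg j).differentiable one_ne_zero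
  have hhd : ∀ j, Differentiable ℝ (h j) := fun j => (hh j).differentiable one_ne_zero
  have hlamnn : ∀ k j, 0 ≤ lamk k j := fun k j =>
    mul_nonneg (by positivity) (le_max_right _ _)
  have hkey : ∀ k, ‖xk k - xstar‖ < ε/2 → ∀ i, xstar i ≠ 0 → 0 < xk k i →
      gradient (LSP f g h (lamk k) (muk k)) (xk k) i = -(2 * (xk k i - xstar i)) := by
    intro k hb i hi hposi
    set x : E n := xk k with hx_def
    set e : E n := EuclideanSpace.single i (1:ℝ) with he_def
    set c : ℝ → E n := fun t => x + t • e with hc_def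
    have hc0 : c 0 = x := by simp [hc_def]
    have hce : HasDerivAt c e 0 := by
      have H : HasDerivAt (fun t : ℝ => x + t • e) ((1:ℝ) • e) 0 :=
        ((hasDerivAt_id 0).smul_const e).const_add x
      simpa [hc_def] using H
    have hfc : HasDerivAt (fun t => f (c t)) (fderiv ℝ f x e) 0 := by
      have H := ((hfd (c 0)).hasFDerivAt).comp_hasDerivAt 0 hce
      rwa [hc0] at H
    have hgc : ∀ j, HasDerivAt (fun t => g j (c t)) (fderiv ℝ (g j) x e) 0 := fun j => by
      have H := ((hgd j (c 0)).hasFDerivAt).comp_hasDerivAt 0 hce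
      rwa [hc0] at H
    have hhc : ∀ j, HasDerivAt (fun t => h j (c t)) (fderiv ℝ (h j) x e) 0 := fun j => by
      have H := ((hhd j (c 0)).hasFDerivAt).comp_hasDerivAt 0 hce
      rwa [hc0] at H
    have hmaxc : ∀ j ∈ Finset.univ, HasDerivAt (fun t => max (g j (c t)) 0 ^ 2)
        (2 * max (g j x) 0 * fderiv ℝ (g j) x e) 0 := fun j _ => by
      have H := (hasDerivAt_maxsq (g j (c 0))).comp 0 (hgc j)
      rw [hc0] at H
      exact H
    have hsqc : ∀ j ∈ Finset.univ, HasDerivAt (fun t => (h j (c t)) ^ 2)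
        (2 * h j x * fderiv ℝ (h j) x e) 0 := fun j _ => by
      have H := (hhc j).fun_pow 2
      simpa [hc0] using H
    have hsum1 : HasDerivAt (fun t => (k:ℝ) * ∑ j, max (g j (c t)) 0 ^ 2)
        ((k:ℝ) * ∑ j, 2 * max (g j x) 0 * fderiv ℝ (g j) x e) 0 :=
      (HasDerivAt.fun_sum hmaxc).const_mul _
    have hsum2 : HasDerivAt (fun t => (k:ℝ) * ∑ j, (h j (c t)) ^ 2)
        ((k:ℝ) * ∑ j, 2 * h j x * fderiv ℝ (h j) x e) 0 :=
      (HasDerivAt.fun_sum hsqc).const_mul _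
    have hip : (inner ℝ (x - xstar) e : ℝ) = x i - xstar i := by
      rw [he_def, EuclideanSpace.inner_single_right]
      simp
    have hQc : HasDerivAt (fun t => ‖c t - xstar‖ ^ 2) (2 * (x i - xstar i)) 0 := by
      have heqfun : (fun t : ℝ => ‖c t - xstar‖ ^ 2)
          = fun t => ‖x - xstar‖ ^ 2 + (2 * (x i - xstar i)) * t + t ^ 2 := by
        funext t
        have h1 : c t - xstar = (x - xstar) + t • e := by
          simp only [hc_def]; abel
        rw [h1, norm_add_sq_real, real_inner_smul_right, hip, norm_smul]
        simp only [he_def, EuclideanSpace.norm_single, norm_one, mul_one, Real.norm_eq_abs,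
          mul_pow, sq_abs]
        ring
      rw [heqfun]
      have H := (((hasDerivAt_id (0:ℝ)).const_mul (2 * (x i - xstar i))).const_add
        (‖x - xstar‖ ^ 2)).fun_add (hasDerivAt_pow 2 (0:ℝ))
      simpa using H
    have hφ : HasDerivAt (fun t => Φ k (c t))
        (fderiv ℝ f x e + ((k:ℝ) * ∑ j, 2 * max (g j x) 0 * fderiv ℝ (g j) x e +
          (k:ℝ) * ∑ j, 2 * h j x * fderiv ℝ (h j) x e) + 2 * (x i - xstar i)) 0 := by
      have heqfun : (fun t => Φ k (c t)) = fun t => f (c t)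
          + ((k:ℝ) * ∑ j, max (g j (c t)) 0 ^ 2 + (k:ℝ) * ∑ j, (h j (c t)) ^ 2)
          + ‖c t - xstar‖ ^ 2 := by
        funext t; simp only [hΦ_def, hP_def, hQ_def]; ring
      rw [heqfun]
      exact (hfc.add (hsum1.add hsum2)).add hQc
    have hδ0 : 0 < min (x i) (ε/2 - ‖x - xstar‖) := lt_min hposi (by linarith)
    have hlm : IsLocalMin (fun t => Φ k (c t)) 0 := by
      have hev := eventually_abs_sub_lt (0:ℝ) hδ0
      refine hev.mono fun t ht => ?_
      rw [sub_zero] at ht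
      have ht1 : |t| < x i := lt_of_lt_of_le ht (min_le_left _ _)
      have ht2 : |t| < ε/2 - ‖x - xstar‖ := lt_of_lt_of_le ht (min_le_right _ _)
      have happly : ∀ j, c t j = x j + t * (if j = i then 1 else 0) := fun j => by
        simp [hc_def, he_def, EuclideanSpace.single_apply]
      have hmem : c t ∈ C := by
        refine ⟨fun j => ?_, fun j hj => ?_, ?_⟩
        · rw [happly j]
          by_cases hji : j = i
          · subst hji
            simp only [eq_self_iff_true, if_true, mul_one]
            have := neg_abs_le t
            linarith
          · simp only [if_neg hji, mul_zero, add_zero]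
            exact (hxkC k).1 j
        · have hji : j ≠ i := fun hcon => hi (by rwa [hcon] at hj)
          rw [happly j]
          simp only [if_neg hji, mul_zero, add_zero]
          exact (hxkC k).2.1 j hj
        · have h1 : c t - xstar = (x - xstar) + t • e := by
            simp only [hc_def]; abel
          rw [h1]
          calc ‖(x - xstar) + t • e‖ ≤ ‖x - xstar‖ + ‖t • e‖ := norm_add_le _ _
            _ = ‖x - xstar‖ + |t| := by
                rw [norm_smul, Real.norm_eq_abs, he_def, EuclideanSpace.norm_single, norm_one,
                  mul_one]
            _ ≤ ε/2 := by linarith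
      have hmm := isMinOn_iff.mp (hxkmin k) (c t) hmem
      simpa [hc0, hx_def] using hmm
    have hD0 := hlm.deriv_eq_zero
    rw [hφ.deriv] at hD0
    have hLg : HasFDerivAt (LSP f g h (lamk k) (muk k))
        ((fderiv ℝ f x + ∑ j, lamk k j • fderiv ℝ (g j) x) + ∑ j, muk k j • fderiv ℝ (h j) x)
        x := by
      have H := (((hfd x).hasFDerivAt).fun_add
        (HasFDerivAt.fun_sum fun j (_ : j ∈ Finset.univ) =>
          ((hgd j x).hasFDerivAt.const_mul (lamk k j)))).fun_add
        (HasFDerivAt.fun_sum fun j (_ : j ∈ Finset.univ) =>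
          ((hhd j x).hasFDerivAt.const_mul (muk k j)))
      exact H
    have hgrad := gradient_coord hLg i
    rw [← he_def] at hgrad
    rw [hgrad]
    simp only [ContinuousLinearMap.add_apply, ContinuousLinearMap.coe_sum', Finset.sum_apply,
      ContinuousLinearMap.coe_smul', Pi.smul_apply, smul_eq_mul]
    have hterm1 : ∑ j, lamk k j * fderiv ℝ (g j) x e
        = (k:ℝ) * ∑ j, 2 * max (g j x) 0 * fderiv ℝ (g j) x e := by
      rw [Finset.mul_sum]
      refine Finset.sum_congr rfl fun j _ => ?_
      simp only [hlamk_def, ← hx_def]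
      ring
    have hterm2 : ∑ j, muk k j * fderiv ℝ (h j) x e
        = (k:ℝ) * ∑ j, 2 * h j x * fderiv ℝ (h j) x e := by
      rw [Finset.mul_sum]
      refine Finset.sum_congr rfl fun j _ => ?_
      simp only [hmuk_def, ← hx_def]
      ring
    rw [hterm1, hterm2]
    linarith
  refine ⟨xk, lamk, muk, hconv, hlamnn, ?_, ?_⟩
  · intro i hi
    have hxpos : 0 < xstar i := lt_of_le_of_ne (hxnn i) (Ne.symm hi)
    have hball : ∀ᶠ k in atTop, ‖xk k - xstar‖ < ε/2 := by
      have h2 : ∀ᶠ y in 𝓝 xstar, ‖y - xstar‖ < ε/2 := by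
        filter_upwards [Metric.ball_mem_nhds xstar (by linarith : (0:ℝ) < ε/2)] with y hy
        rwa [Metric.mem_ball, dist_eq_norm] at hy
      exact hconv.eventually h2
    have hxi : Tendsto (fun k => xk k i) atTop (𝓝 (xstar i)) :=
      ((EuclideanSpace.proj i).continuous.tendsto xstar).comp hconv
    have hposev : ∀ᶠ k in atTop, 0 < xk k i := hxi.eventually (eventually_gt_nhds hxpos)
    have heq : ∀ᶠ k in atTop,
        gradient (LSP f g h (lamk k) (muk k)) (xk k) i = -(2 * (xk k i - xstar i)) := by
      filter_upwards [hball, hposev] with k h1 h2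
      exact hkey k h1 i hi h2
    have hlim : Tendsto (fun k => -(2 * (xk k i - xstar i))) atTop (𝓝 0) := by
      have H := (((hxi.sub (tendsto_const_nhds (x := xstar i))).const_mul 2)).neg
      simpa using H
    exact Tendsto.congr' (heq.mono fun k hk => hk.symm) hlim
  · intro i
    have hgt : Tendsto (fun k => g i (xk k)) atTop (𝓝 (g i xstar)) :=
      ((hg i).continuous.tendsto xstar).comp hconv
    rcases lt_or_eq_of_le (hgx i) with hlt | heq0
    · have hev : ∀ᶠ k in atTop, g i (xk k) < 0 :=
        hgt.eventually (eventually_lt_nhds hlt)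
      have heqm : ∀ᶠ k in atTop, min (-(g i (xk k))) (lamk k i) = 0 := by
        filter_upwards [hev] with k hk
        have h1 : max (g i (xk k)) 0 = 0 := max_eq_right hk.le
        have h2 : lamk k i = 0 := by simp [hlamk_def, h1]
        rw [h2]
        exact min_eq_right (by linarith)
      exact Tendsto.congr' (heqm.mono fun k hk => hk.symm) tendsto_const_nhds
    · have hup : Tendsto (fun k => -(g i (xk k))) atTop (𝓝 0) := by
        have H := hgt.neg
        rw [heq0, neg_zero] at H
        exact H
      have hlo : Tendsto (fun k => min (-(g i (xk k))) 0) atTop (𝓝 0) := by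
        have H := hup.min (tendsto_const_nhds (x := (0:ℝ)) (f := atTop))
        rw [min_self] at H
        exact H
      exact tendsto_of_tendsto_of_tendsto_of_le_of_le hlo hup
        (fun k => min_le_min le_rfl (hlamnn k i)) (fun k => min_le_left _ _)
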